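/- Let C > 0 with C ≠ 1, and let S ∈ ℝ with S ≠ 0. Then the function S ↦ (2/ln C)·C^{√|S|}·(√|S| − 1/ln C) is differentiable at S with derivative C^{√|S|}·sign(S), where sign(S) = 1 for S > 0 and sign(S) = −1 for S < 0. -/

import Mathlib

/-- Conclusion of case 2 (formula (14)): for `S ≠ 0`,
`d/dS [(2/ln C) * C^{√|S|} * (√|S| - 1/ln C)] = C^{√|S|} * sign S`. -/
theorem stmt_5 (C : ℝ) (hC : 0 < C) (hC1 : C ≠ 1) (S : ℝ) (hS : S ≠ 0) :
    HasDerivAt (fun s : ℝ =>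
        (2 / Real.log C) * C ^ Real.sqrt |s| * (Real.sqrt |s| - 1 / Real.log C))
      (C ^ Real.sqrt |S| * Real.sign S) S := by
  have hL : Real.log C ≠ 0 := Real.log_ne_zero_of_pos_of_ne_one hC hC1
  have habs : |S| ≠ 0 := abs_ne_zero.mpr hS
  have hu : Real.sqrt |S| ≠ 0 := by
    simpa [Real.sqrt_eq_zero', not_le] using (abs_pos.mpr hS).ne'
  have h1 : HasDerivAt (fun s : ℝ => |s|) (Real.sign S) S := by
    have := hasDerivAt_abs hS
    rcases lt_or_gt_of_ne hS with h | h
    · simpa [Real.sign_of_neg h, h] using this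
    · simpa [Real.sign_of_pos h, h] using this
  have h2 : HasDerivAt (fun s : ℝ => Real.sqrt |s|)
      (1 / (2 * Real.sqrt |S|) * Real.sign S) S :=
    (Real.hasDerivAt_sqrt habs).comp S h1
  have h3 : HasDerivAt (fun s : ℝ => C ^ Real.sqrt |s|)
      (C ^ Real.sqrt |S| * Real.log C * (1 / (2 * Real.sqrt |S|) * Real.sign S)) S :=
    (Real.hasStrictDerivAt_const_rpow hC _).hasDerivAt.comp S h2
  have h4 := ((h3.const_mul (2 / Real.log C)).mul (h2.sub_const (1 / Real.log C)))
  convert h4 using 1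
  · rfl
  · rfl
  · rfl
  field_simp
  ring
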